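/- arXiv:1110.2929 — 3 statements merged into one kernel-verified Lean document; each statement's English description precedes it below -/
import Mathlib

section
/- Let δ > 0 and let φ > δ satisfy ψ(φ) = δ. Then ∫_0^∞ e^{−φ a} \bar{π}(a) da = (φ − δ)/φ. Consequently, the measure ν on (0,∞) × (0,∞] defined for Borel sets B by ν(B) = (φ/(φ − δ)) [ ∫_{(0,∞)} ( ∫_0^x 1_B(a, x − a) e^{−φ a} da ) π(dx) + k ∫_0^∞ 1_B(a, ∞) e^{−φ a} da ] is a probability measure. (This is the limiting joint law of the age and residual lifetime of a detected individual in Proposition 4.5.) -/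
open MeasureTheory Set ENNReal

/-- The Laplace exponent `ψ(a) = a − ∫_{(0,∞)} (1 − e^{−a x}) π(dx) − k`. -/
noncomputable def laplaceExponent (π : Measure ℝ) (k : ℝ) (a : ℝ) : ℝ :=
  a - ∫ x in Set.Ioi (0 : ℝ), (1 - Real.exp (-a * x)) ∂π - k

/-- The tail function `t ↦ π((t,∞)) + k`. -/
noncomputable def tailFn (π : Measure ℝ) (k : ℝ) (t : ℝ) : ℝ :=
  (π (Set.Ioi t)).toReal + k

lemma prf_factA (φ : ℝ) (hφ : 0 < φ) (x : ℝ) :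
    ∫ a in (0:ℝ)..x, Real.exp (-φ * a) = (1 - Real.exp (-φ * x)) / φ := by
  have h := intervalIntegral.integral_comp_mul_left (a := (0:ℝ)) (b := x)
    (fun y => Real.exp y) (c := -φ)
  simp only [neg_mul] at h ⊢
  rw [h (by simp [hφ.ne']), integral_exp]
  rw [smul_eq_mul, eq_div_iff hφ.ne']
  simp only [mul_zero, neg_zero, Real.exp_zero]
  ring_nf
  rw [mul_inv_cancel₀ hφ.ne']
  ring

lemma prf_factB (φ : ℝ) (hφ : 0 < φ) : ∫ a in Ioi (0:ℝ), Real.exp (-φ * a) = 1 / φ := by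
  have h := MeasureTheory.integral_comp_mul_left_Ioi (fun y => Real.exp (-y)) 0 hφ
  simp only [mul_zero, integral_exp_neg_Ioi_zero, smul_eq_mul, mul_one] at h
  simp only [neg_mul]
  rw [h, one_div]

lemma prf_intOnB (φ : ℝ) (hφ : 0 < φ) :
    IntegrableOn (fun a => Real.exp (-φ * a)) (Ioi (0:ℝ)) := by
  simpa [neg_mul] using exp_neg_integrableOn_Ioi 0 hφ

lemma prf_L1 (φ : ℝ) (hφ : 0 < φ) (x : ℝ) :
    ∫⁻ a in Ioo (0:ℝ) x, ENNReal.ofReal (Real.exp (-φ * a))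
      = ENNReal.ofReal ((1 - Real.exp (-φ * x)) / φ) := by
  rcases le_or_gt x 0 with hx | hx
  · rw [Set.Ioo_eq_empty (by intro h; exact absurd (h.trans_le hx) (lt_irrefl 0))]
    rw [Measure.restrict_empty, lintegral_zero_measure]
    symm
    rw [ENNReal.ofReal_eq_zero]
    apply div_nonpos_of_nonpos_of_nonneg _ hφ.le
    have : (1:ℝ) ≤ Real.exp (-φ * x) := by
      rw [← Real.exp_zero]
      apply Real.exp_le_exp.mpr
      nlinarith
    linarith
  · rw [← ofReal_integral_eq_lintegral_ofReal
      ((prf_intOnB φ hφ).mono_set Set.Ioo_subset_Ioi_self)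
      (ae_of_all _ fun a => (Real.exp_pos _).le)]
    congr 1
    rw [← MeasureTheory.integral_Ioc_eq_integral_Ioo,
      ← intervalIntegral.integral_of_le hx.le, prf_factA φ hφ x]

lemma prf_L2 (φ : ℝ) (hφ : 0 < φ) :
    ∫⁻ a in Ioi (0:ℝ), ENNReal.ofReal (Real.exp (-φ * a)) = ENNReal.ofReal (1 / φ) := by
  rw [← ofReal_integral_eq_lintegral_ofReal (prf_intOnB φ hφ)
    (ae_of_all _ fun a => (Real.exp_pos _).le), prf_factB φ hφ]

lemma prf_KEY (π : Measure ℝ) [IsFiniteMeasure π]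
    (k : ℝ) (hk : 0 ≤ k) (δ φ : ℝ) (hδ : 0 < δ) (hφδ : δ < φ)
    (hroot : laplaceExponent π k φ = δ) :
    (∫⁻ x in Ioi (0:ℝ), (∫⁻ a in Ioo (0:ℝ) x, ENNReal.ofReal (Real.exp (-φ * a))) ∂π)
      + ENNReal.ofReal k * ∫⁻ a in Ioi (0:ℝ), ENNReal.ofReal (Real.exp (-φ * a))
    = ENNReal.ofReal ((φ - δ) / φ) := by
  have hφ : 0 < φ := hδ.trans hφδ
  set I := ∫ x in Ioi (0:ℝ), (1 - Real.exp (-φ * x)) ∂π with hI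
  have hmeas : Measurable fun x : ℝ => 1 - Real.exp (-φ * x) := by fun_prop
  have hI_int : IntegrableOn (fun x => 1 - Real.exp (-φ * x)) (Ioi (0:ℝ)) π := by
    apply Integrable.mono' (integrable_const 1) hmeas.aestronglyMeasurable
    filter_upwards [ae_restrict_mem measurableSet_Ioi] with x hx
    have h1 : Real.exp (-φ * x) ≤ 1 := by
      rw [← Real.exp_zero]; apply Real.exp_le_exp.mpr; nlinarith [hx.out]
    have h2 : 0 < Real.exp (-φ * x) := Real.exp_pos _
    rw [Real.norm_eq_abs, abs_le]; constructor <;> linarith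
  have hI_nonneg : 0 ≤ I := by
    apply setIntegral_nonneg measurableSet_Ioi
    intro x hx
    have : Real.exp (-φ * x) ≤ 1 := by
      rw [← Real.exp_zero]; apply Real.exp_le_exp.mpr; nlinarith [hx.out]
    linarith
  have hIk : I + k = φ - δ := by
    unfold laplaceExponent at hroot
    rw [← hI] at hroot
    linarith
  have h1 : (∫⁻ x in Ioi (0:ℝ), (∫⁻ a in Ioo (0:ℝ) x, ENNReal.ofReal (Real.exp (-φ * a))) ∂π)
      = ENNReal.ofReal (I / φ) := by
    rw [lintegral_congr (fun x => prf_L1 φ hφ x)]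
    rw [← ofReal_integral_eq_lintegral_ofReal (hI_int.div_const φ)]
    · rw [integral_div]
    · filter_upwards [ae_restrict_mem measurableSet_Ioi] with x hx
      have : Real.exp (-φ * x) ≤ 1 := by
        rw [← Real.exp_zero]; apply Real.exp_le_exp.mpr; nlinarith [hx.out]
      have h0 : (0:ℝ) ≤ 1 - Real.exp (-φ * x) := by linarith
      exact div_nonneg h0 hφ.le
  rw [h1, prf_L2 φ hφ, ← ENNReal.ofReal_mul hk,
    ← ENNReal.ofReal_add (div_nonneg hI_nonneg hφ.le) (by positivity)]
  congr 1
  rw [← hIk]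
  field_simp

lemma prf_SWAP (π : Measure ℝ) [IsFiniteMeasure π] (hπ : π (Set.Iic 0) = 0)
    (φ : ℝ) (hφ : 0 < φ) :
    ∫⁻ a in Ioi (0:ℝ), ENNReal.ofReal (Real.exp (-φ * a)) * π (Ioi a)
      = ∫⁻ x in Ioi (0:ℝ), (∫⁻ a in Ioo (0:ℝ) x, ENNReal.ofReal (Real.exp (-φ * a))) ∂π := by
  have hres : π.restrict (Ioi (0:ℝ)) = π := by
    apply Measure.restrict_eq_self_of_ae_mem
    rw [MeasureTheory.ae_iff]
    convert hπ using 2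
    ext x
    simp
  set G : ℝ → ℝ → ℝ≥0∞ := fun a x =>
    Set.indicator (Ioi a) (fun _ => ENNReal.ofReal (Real.exp (-φ * a))) x with hG
  have hstep1 : ∀ a : ℝ, ∫⁻ x, G a x ∂π = ENNReal.ofReal (Real.exp (-φ * a)) * π (Ioi a) := by
    intro a
    rw [hG, lintegral_indicator measurableSet_Ioi, setLIntegral_const]
  have hGmeas : Measurable (Function.uncurry G) := by
    have : Function.uncurry G = Set.indicator {q : ℝ × ℝ | q.1 < q.2}
        (fun q => ENNReal.ofReal (Real.exp (-φ * q.1))) := by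
      funext p
      by_cases h : p.1 < p.2 <;>
        simp [Function.uncurry, hG, Set.indicator, h]
    rw [this]
    exact Measurable.indicator (by fun_prop) (measurableSet_lt measurable_fst measurable_snd)
  calc ∫⁻ a in Ioi (0:ℝ), ENNReal.ofReal (Real.exp (-φ * a)) * π (Ioi a)
      = ∫⁻ a in Ioi (0:ℝ), ∫⁻ x, G a x ∂π := by
        exact lintegral_congr fun a => (hstep1 a).symm
    _ = ∫⁻ x, (∫⁻ a in Ioi (0:ℝ), G a x) ∂π := by
        exact lintegral_lintegral_swap hGmeas.aemeasurable
    _ = ∫⁻ x, (∫⁻ a in Ioo (0:ℝ) x, ENNReal.ofReal (Real.exp (-φ * a))) ∂π := by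
        apply lintegral_congr
        intro x
        have : ∀ a : ℝ, G a x = Set.indicator (Iio x)
            (fun a => ENNReal.ofReal (Real.exp (-φ * a))) a := by
          intro a
          by_cases h : a < x <;> simp [hG, Set.indicator, h]
        rw [lintegral_congr this, lintegral_indicator measurableSet_Iio,
          Measure.restrict_restrict measurableSet_Iio, Set.Iio_inter_Ioi]
    _ = ∫⁻ x in Ioi (0:ℝ), (∫⁻ a in Ioo (0:ℝ) x, ENNReal.ofReal (Real.exp (-φ * a))) ∂π := by
        rw [hres]

lemma prf_tail_meas (π : Measure ℝ) [IsFiniteMeasure π] (k : ℝ) :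
    Measurable (tailFn π k) := by
  have h1 : Antitone (fun a : ℝ => (π (Ioi a)).toReal) := by
    intro a b hab
    exact ENNReal.toReal_mono (measure_ne_top π _) (measure_mono (Ioi_subset_Ioi hab))
  exact (h1.measurable).add_const k

lemma prf_PART1 (π : Measure ℝ) [IsFiniteMeasure π] (hπ : π (Set.Iic 0) = 0)
    (k : ℝ) (hk : 0 ≤ k) (δ φ : ℝ) (hδ : 0 < δ) (hφδ : δ < φ)
    (hroot : laplaceExponent π k φ = δ) :
    (∫ a in Set.Ioi (0 : ℝ), Real.exp (-φ * a) * tailFn π k a) = (φ - δ) / φ := by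
  have hφ : 0 < φ := hδ.trans hφδ
  have htail_nonneg : ∀ a, 0 ≤ tailFn π k a := fun a =>
    add_nonneg ENNReal.toReal_nonneg hk
  set C : ℝ := (π Set.univ).toReal + k with hC
  have htail_le : ∀ a, tailFn π k a ≤ C := by
    intro a
    apply add_le_add_left
    exact ENNReal.toReal_mono (measure_ne_top π _) (measure_mono (Set.subset_univ _))
  have hg_int : IntegrableOn (fun a => Real.exp (-φ * a) * tailFn π k a) (Ioi (0:ℝ)) := by
    apply Integrable.mono' ((prf_intOnB φ hφ).const_mul C)
    · exact ((Real.measurable_exp.comp (by fun_prop)).mul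
        (prf_tail_meas π k)).aestronglyMeasurable
    · apply ae_of_all
      intro a
      rw [Real.norm_eq_abs, abs_of_nonneg (mul_nonneg (Real.exp_pos _).le (htail_nonneg a))]
      calc Real.exp (-φ * a) * tailFn π k a ≤ Real.exp (-φ * a) * C :=
            mul_le_mul_of_nonneg_left (htail_le a) (Real.exp_pos _).le
        _ = C * Real.exp (-φ * a) := mul_comm _ _
  have hmain : ENNReal.ofReal (∫ a in Set.Ioi (0:ℝ), Real.exp (-φ * a) * tailFn π k a)
      = ENNReal.ofReal ((φ - δ) / φ) := by
    rw [ofReal_integral_eq_lintegral_ofReal hg_int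
      (ae_of_all _ fun a => mul_nonneg (Real.exp_pos _).le (htail_nonneg a))]
    have hpt : ∀ a : ℝ, ENNReal.ofReal (Real.exp (-φ * a) * tailFn π k a)
        = ENNReal.ofReal (Real.exp (-φ * a)) * π (Ioi a)
          + ENNReal.ofReal (Real.exp (-φ * a)) * ENNReal.ofReal k := by
      intro a
      rw [ENNReal.ofReal_mul (Real.exp_pos _).le, tailFn,
        ENNReal.ofReal_add ENNReal.toReal_nonneg hk,
        ENNReal.ofReal_toReal (measure_ne_top π _), mul_add]
    rw [lintegral_congr hpt]
    have hmeas1 : Measurable fun a : ℝ => ENNReal.ofReal (Real.exp (-φ * a)) * π (Ioi a) := by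
      apply Measurable.mul (by fun_prop)
      have : Antitone fun a : ℝ => π (Ioi a) := fun a b hab =>
        measure_mono (Ioi_subset_Ioi hab)
      exact this.measurable
    rw [lintegral_add_left hmeas1]
    rw [prf_SWAP π hπ φ hφ]
    have h2 : ∫⁻ a in Ioi (0:ℝ), ENNReal.ofReal (Real.exp (-φ * a)) * ENNReal.ofReal k
        = ENNReal.ofReal k * ∫⁻ a in Ioi (0:ℝ), ENNReal.ofReal (Real.exp (-φ * a)) := by
      rw [lintegral_mul_const _ (by fun_prop), mul_comm]
    rw [h2, prf_KEY π k hk δ φ hδ hφδ hroot]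
  have h1 : 0 ≤ ∫ a in Set.Ioi (0:ℝ), Real.exp (-φ * a) * tailFn π k a :=
    setIntegral_nonneg measurableSet_Ioi fun a _ =>
      mul_nonneg (Real.exp_pos _).le (htail_nonneg a)
  have h2 : (0:ℝ) ≤ (φ - δ) / φ := div_nonneg (by linarith) hφ.le
  exact (ENNReal.ofReal_eq_ofReal_iff h1 h2).mp hmain

section MeasureConstruction

variable (π : Measure ℝ) (φ : ℝ)

noncomputable def prf_wd (φ : ℝ) : Measure ℝ :=
  volume.withDensity fun a => ENNReal.ofReal (Real.exp (-φ * a))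

noncomputable def prf_mu1 (π : Measure ℝ) (φ : ℝ) : Measure (ℝ × ℝ≥0∞) :=
  Measure.map (fun p : ℝ × ℝ => (p.2, ENNReal.ofReal (p.1 - p.2)))
    (((π.restrict (Ioi 0)).prod (prf_wd φ)).restrict {p : ℝ × ℝ | 0 < p.2 ∧ p.2 < p.1})

noncomputable def prf_mu2 (φ : ℝ) : Measure (ℝ × ℝ≥0∞) :=
  Measure.map (fun a : ℝ => (a, (⊤ : ℝ≥0∞))) ((prf_wd φ).restrict (Ioi 0))

instance prf_wd_sfinite (φ : ℝ) : SFinite (prf_wd φ) := by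
  unfold prf_wd; infer_instance

lemma prf_F_meas : Measurable (fun p : ℝ × ℝ => (p.2, ENNReal.ofReal (p.1 - p.2))) :=
  measurable_snd.prodMk ((measurable_fst.sub measurable_snd).ennreal_ofReal)

lemma prf_S_meas : MeasurableSet {p : ℝ × ℝ | 0 < p.2 ∧ p.2 < p.1} :=
  (measurableSet_lt measurable_const measurable_snd).inter
    (measurableSet_lt measurable_snd measurable_fst)

lemma prf_mu2_apply (φ : ℝ) {B : Set (ℝ × ℝ≥0∞)} (hB : MeasurableSet B) :
    prf_mu2 φ B = ∫⁻ a in Set.Ioi (0 : ℝ),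
        B.indicator (fun _ => (1 : ℝ≥0∞)) (a, (⊤ : ℝ≥0∞)) *
          ENNReal.ofReal (Real.exp (-φ * a)) := by
  have hh : Measurable (fun a : ℝ => (a, (⊤ : ℝ≥0∞))) :=
    measurable_id.prodMk measurable_const
  rw [prf_mu2, Measure.map_apply hh hB, Measure.restrict_apply (hh hB), prf_wd,
    withDensity_apply _ ((hh hB).inter measurableSet_Ioi),
    ← Measure.restrict_restrict (hh hB), ← lintegral_indicator (hh hB)]
  apply lintegral_congr
  intro a
  by_cases h : (a, (⊤ : ℝ≥0∞)) ∈ B <;>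
    simp [Set.indicator, h, Set.mem_preimage]

lemma prf_mu1_apply (π : Measure ℝ) [IsFiniteMeasure π] (φ : ℝ)
    {B : Set (ℝ × ℝ≥0∞)} (hB : MeasurableSet B) :
    prf_mu1 π φ B = ∫⁻ x in Set.Ioi (0 : ℝ),
        (∫⁻ a in Set.Ioo (0 : ℝ) x,
          B.indicator (fun _ => (1 : ℝ≥0∞)) (a, ENNReal.ofReal (x - a)) *
            ENNReal.ofReal (Real.exp (-φ * a))) ∂π := by
  have hFB : MeasurableSet ((fun p : ℝ × ℝ => (p.2, ENNReal.ofReal (p.1 - p.2))) ⁻¹' B) :=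
    prf_F_meas hB
  rw [prf_mu1, Measure.map_apply prf_F_meas hB,
    Measure.restrict_apply hFB, Measure.prod_apply (hFB.inter prf_S_meas)]
  apply lintegral_congr
  intro x
  have hsec : (Prod.mk x ⁻¹' ((fun p : ℝ × ℝ => (p.2, ENNReal.ofReal (p.1 - p.2))) ⁻¹' B
      ∩ {p : ℝ × ℝ | 0 < p.2 ∧ p.2 < p.1}))
      = {a : ℝ | (a, ENNReal.ofReal (x - a)) ∈ B} ∩ Ioo 0 x := by
    ext a
    simp [Set.mem_preimage, Set.mem_Ioo, and_comm]
  have hpre : MeasurableSet {a : ℝ | (a, ENNReal.ofReal (x - a)) ∈ B} := by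
    have : Measurable (fun a : ℝ => (a, ENNReal.ofReal (x - a))) :=
      measurable_id.prodMk ((measurable_const.sub measurable_id).ennreal_ofReal)
    exact this hB
  rw [hsec, prf_wd, withDensity_apply _ (hpre.inter measurableSet_Ioo)]
  rw [← Measure.restrict_restrict hpre, ← lintegral_indicator hpre]
  apply lintegral_congr
  intro a
  by_cases h : (a, ENNReal.ofReal (x - a)) ∈ B <;>
    simp [Set.indicator, h]

end MeasureConstruction

/-- Let `δ > 0` and let `φ > δ` satisfy `ψ(φ) = δ`.  Then
`∫_0^∞ e^{−φ a} \bar{π}(a) da = (φ − δ)/φ`.  Consequently, the measure `ν` on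
`(0,∞) × (0,∞]` (the second coordinate taken in `ℝ≥0∞`) defined for Borel sets `B` by
`ν(B) = (φ/(φ − δ)) [ ∫_{(0,∞)} (∫_0^x 1_B(a, x − a) e^{−φ a} da) π(dx)
  + k ∫_0^∞ 1_B(a, ∞) e^{−φ a} da ]`
is a probability measure: the limiting joint law of the age and residual lifetime of a
detected individual. -/
theorem age_residualLifetime_probabilityMeasure
    (π : Measure ℝ) [IsFiniteMeasure π] (hπ : π (Set.Iic 0) = 0)
    (k : ℝ) (hk : 0 ≤ k) (δ φ : ℝ) (hδ : 0 < δ) (hφδ : δ < φ)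
    (hroot : laplaceExponent π k φ = δ) :
    (∫ a in Set.Ioi (0 : ℝ), Real.exp (-φ * a) * tailFn π k a) = (φ - δ) / φ ∧
    ∃ ν : Measure (ℝ × ℝ≥0∞), IsProbabilityMeasure ν ∧
      ∀ B : Set (ℝ × ℝ≥0∞), MeasurableSet B →
        ν B = ENNReal.ofReal (φ / (φ - δ)) *
          ((∫⁻ x in Set.Ioi (0 : ℝ),
              (∫⁻ a in Set.Ioo (0 : ℝ) x,
                B.indicator (fun _ => (1 : ℝ≥0∞)) (a, ENNReal.ofReal (x - a)) *
                  ENNReal.ofReal (Real.exp (-φ * a))) ∂π) +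
            ENNReal.ofReal k *
              ∫⁻ a in Set.Ioi (0 : ℝ),
                B.indicator (fun _ => (1 : ℝ≥0∞)) (a, (⊤ : ℝ≥0∞)) *
                  ENNReal.ofReal (Real.exp (-φ * a))) := by
  have hφ : 0 < φ := hδ.trans hφδ
  have hφδ' : 0 < φ - δ := sub_pos.mpr hφδ
  refine ⟨prf_PART1 π hπ k hk δ φ hδ hφδ hroot, ?_⟩
  set ν : Measure (ℝ × ℝ≥0∞) :=
    ENNReal.ofReal (φ / (φ - δ)) • (prf_mu1 π φ + ENNReal.ofReal k • prf_mu2 φ) with hν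
  have happly : ∀ B : Set (ℝ × ℝ≥0∞), MeasurableSet B →
      ν B = ENNReal.ofReal (φ / (φ - δ)) *
        ((∫⁻ x in Set.Ioi (0 : ℝ),
            (∫⁻ a in Set.Ioo (0 : ℝ) x,
              B.indicator (fun _ => (1 : ℝ≥0∞)) (a, ENNReal.ofReal (x - a)) *
                ENNReal.ofReal (Real.exp (-φ * a))) ∂π) +
          ENNReal.ofReal k *
            ∫⁻ a in Set.Ioi (0 : ℝ),
              B.indicator (fun _ => (1 : ℝ≥0∞)) (a, (⊤ : ℝ≥0∞)) *
                ENNReal.ofReal (Real.exp (-φ * a))) := by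
    intro B hB
    rw [hν, Measure.smul_apply, Measure.add_apply, Measure.smul_apply, smul_eq_mul,
      smul_eq_mul, prf_mu1_apply π φ hB, prf_mu2_apply φ hB]
  refine ⟨ν, ⟨?_⟩, happly⟩
  rw [happly Set.univ MeasurableSet.univ]
  simp only [Set.indicator_univ, one_mul]
  rw [prf_KEY π k hk δ φ hδ hφδ hroot,
    ← ENNReal.ofReal_mul (div_nonneg hφ.le hφδ'.le)]
  have : φ / (φ - δ) * ((φ - δ) / φ) = 1 := by
    field_simp
  rw [this, ENNReal.ofReal_one]
end

section
/- Set S₀ := 0, S_n := V₁ + ⋯ + V_n, and M := max{ n ≥ 0 : S_n < e }. Then for every n ≥ 0 and every bounded measurable function F : (0,∞]^n → [0,∞), E[ F(V₁,…,V_n) 1_{M = n} ] = E[ F(V₁,…,V_n) ∏_{i=1}^n e^{−δ V_i} ] · E[ 1 − e^{−δ V₁} ], with the convention e^{−δ·∞} := 0. (This is the exponential tilting identity underlying the proof of Theorem 3.3: conditional on M = n, the first n excursion lifetimes follow the e^{−δ V}-tilted law.) -/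
open MeasureTheory ProbabilityTheory ENNReal

/-- `e^{−δ t}` for `t ∈ [0,∞]`, with the convention `e^{−δ·∞} := 0`. -/
noncomputable def expNegScaled (δ : ℝ) (t : ℝ≥0∞) : ℝ :=
  if t = ⊤ then 0 else Real.exp (-δ * t.toReal)

/-- With `S₀ := 0` and `S_n := V₁ + ⋯ + V_n`, this is `M := max{n ≥ 0 : S_n < e}`. -/
noncomputable def detectionIndex {Ω : Type*} (V : ℕ → Ω → ℝ≥0∞) (e : Ω → ℝ) (ω : Ω) : ℕ :=
  sSup {n : ℕ | (∑ i ∈ Finset.range n, V i ω) < ENNReal.ofReal (e ω)}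

lemma measurable_expNegScaled (δ : ℝ) : Measurable (expNegScaled δ) := by
  unfold expNegScaled
  exact Measurable.ite (measurableSet_singleton ⊤) measurable_const
    (Real.measurable_exp.comp (ENNReal.measurable_toReal.const_mul (-δ)))

lemma expNegScaled_nonneg (δ : ℝ) (t : ℝ≥0∞) : 0 ≤ expNegScaled δ t := by
  unfold expNegScaled; split <;> [rfl; positivity]

lemma expNegScaled_le_one {δ : ℝ} (hδ : 0 ≤ δ) (t : ℝ≥0∞) : expNegScaled δ t ≤ 1 := by
  unfold expNegScaled; split
  · norm_num
  · exact Real.exp_le_one_iff.mpr (by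
      have := ENNReal.toReal_nonneg (a := t); nlinarith)

lemma expNegScaled_lt_one {δ : ℝ} (hδ : 0 < δ) {t : ℝ≥0∞} (ht : 0 < t) :
    expNegScaled δ t < 1 := by
  unfold expNegScaled
  split_ifs with h
  · norm_num
  · have htr : 0 < t.toReal := ENNReal.toReal_pos ht.ne' h
    exact Real.exp_lt_one_iff.mpr (by nlinarith)

lemma expNegScaled_add (δ : ℝ) (a b : ℝ≥0∞) :
    expNegScaled δ (a + b) = expNegScaled δ a * expNegScaled δ b := by
  unfold expNegScaled
  rcases eq_or_ne a ⊤ with ha | ha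
  · simp [ha]
  rcases eq_or_ne b ⊤ with hb | hb
  · simp [hb]
  · rw [if_neg (by simp [ENNReal.add_eq_top, ha, hb]), if_neg ha, if_neg hb,
      ENNReal.toReal_add ha hb, ← Real.exp_add]
    ring_nf

lemma expNegScaled_sum (δ : ℝ) {ι : Type*} (s : Finset ι) (f : ι → ℝ≥0∞) :
    expNegScaled δ (∑ i ∈ s, f i) = ∏ i ∈ s, expNegScaled δ (f i) := by
  classical
  induction s using Finset.cons_induction with
  | empty => simp [expNegScaled]
  | cons i s hi ih => rw [Finset.sum_cons, Finset.prod_cons, expNegScaled_add, ih]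

lemma expMeasure_Iic {r : ℝ} (hr : 0 < r) (a : ℝ) :
    expMeasure r (Set.Iic a) =
      ENNReal.ofReal (if 0 ≤ a then 1 - Real.exp (-(r * a)) else 0) := by
  haveI := isProbabilityMeasure_expMeasure hr
  have h := cdf_expMeasure_eq hr a
  rw [cdf_eq_real, measureReal_def] at h
  rw [← h, ENNReal.ofReal_toReal (measure_ne_top _ _)]

lemma expMeasure_lt_ofReal {r : ℝ} (hr : 0 < r) (s : ℝ≥0∞) :
    expMeasure r {t : ℝ | s < ENNReal.ofReal t} = ENNReal.ofReal (expNegScaled r s) := by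
  haveI := isProbabilityMeasure_expMeasure hr
  rcases eq_or_ne s ⊤ with hs | hs
  · have : {t : ℝ | s < ENNReal.ofReal t} = ∅ := by
      ext t; simp [hs, (ENNReal.ofReal_lt_top).not_gt]
    simp [this, hs, expNegScaled]
  · have hset : {t : ℝ | s < ENNReal.ofReal t} = Set.Ioi s.toReal := by
      ext t
      simp [Set.mem_Ioi, ENNReal.lt_ofReal_iff_toReal_lt hs]
    rw [hset, ← Set.compl_Iic, measure_compl measurableSet_Iic (measure_ne_top _ _),
      measure_univ, expMeasure_Iic hr, if_pos ENNReal.toReal_nonneg,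
      ENNReal.ofReal_sub _ (Real.exp_nonneg _), ENNReal.ofReal_one,
      ENNReal.sub_sub_cancel ENNReal.one_ne_top
        (ENNReal.ofReal_le_one.mpr (Real.exp_le_one_iff.mpr (by
          have := ENNReal.toReal_nonneg (a := s); nlinarith)))]
    unfold expNegScaled
    rw [if_neg hs]; ring_nf

lemma key_indep_integral {Ω : Type*} [MeasurableSpace Ω] (P : Measure Ω)
    [IsProbabilityMeasure P] (δ : ℝ) (hδ : 0 < δ)
    (V : ℕ → Ω → ℝ≥0∞) (hVmeas : ∀ i, Measurable (V i))
    (e : Ω → ℝ) (he : Measurable e) (hlaw : Measure.map e P = expMeasure δ)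
    (hindep : IndepFun (fun ω => fun i => V i ω) e P)
    (φ : (ℕ → ℝ≥0∞) → ℝ) (hφ : Measurable φ) (C : ℝ) (hbd : ∀ x, |φ x| ≤ C)
    (T : (ℕ → ℝ≥0∞) → ℝ≥0∞) (hT : Measurable T) :
    (∫ ω, φ (fun i => V i ω) *
        (if T (fun i => V i ω) < ENNReal.ofReal (e ω) then (1:ℝ) else 0) ∂P)
      = ∫ ω, φ (fun i => V i ω) * expNegScaled δ (T (fun i => V i ω)) ∂P := by
  haveI := isProbabilityMeasure_expMeasure hδ
  set X : Ω → (ℕ → ℝ≥0∞) := fun ω i => V i ω with hX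
  have hXm : Measurable X := measurable_pi_lambda _ hVmeas
  have hmap : Measure.map (fun ω => (X ω, e ω)) P = (Measure.map X P).prod (Measure.map e P) :=
    (indepFun_iff_map_prod_eq_prod_map_map hXm.aemeasurable he.aemeasurable).mp hindep
  haveI : IsProbabilityMeasure (Measure.map X P) := Measure.isProbabilityMeasure_map hXm.aemeasurable
  set H : (ℕ → ℝ≥0∞) × ℝ → ℝ :=
    fun p => φ p.1 * (if T p.1 < ENNReal.ofReal p.2 then (1:ℝ) else 0) with hHdef
  have hsetm : MeasurableSet {p : (ℕ → ℝ≥0∞) × ℝ | T p.1 < ENNReal.ofReal p.2} :=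
    measurableSet_lt (hT.comp measurable_fst)
      (ENNReal.measurable_ofReal.comp measurable_snd)
  have hHm : Measurable H :=
    (hφ.comp measurable_fst).mul (Measurable.ite hsetm measurable_const measurable_const)
  have hC0 : 0 ≤ C := le_trans (abs_nonneg _) (hbd (fun _ => 0))
  have hHbd : ∀ p, ‖H p‖ ≤ C := by
    intro p
    rw [Real.norm_eq_abs, hHdef, abs_mul]
    calc |φ p.1| * |if T p.1 < ENNReal.ofReal p.2 then (1:ℝ) else 0|
        ≤ C * 1 := by
          apply mul_le_mul (hbd _) ?_ (abs_nonneg _) hC0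
          split <;> simp
      _ = C := mul_one C
  have hHint : Integrable H ((Measure.map X P).prod (Measure.map e P)) :=
    (integrable_const C).mono' hHm.aestronglyMeasurable (ae_of_all _ hHbd)
  have h1 : (∫ ω, φ (fun i => V i ω) *
        (if T (fun i => V i ω) < ENNReal.ofReal (e ω) then (1:ℝ) else 0) ∂P)
      = ∫ p, H p ∂((Measure.map X P).prod (Measure.map e P)) := by
    rw [← hmap, integral_map (hXm.prodMk he).aemeasurable hHm.aestronglyMeasurable]
  rw [h1, integral_prod _ hHint]
  have h2 : ∀ x : ℕ → ℝ≥0∞,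
      (∫ t, H (x, t) ∂(Measure.map e P)) = φ x * expNegScaled δ (T x) := by
    intro x
    rw [hlaw]
    have : ∀ t : ℝ, H (x, t) = φ x * Set.indicator {t : ℝ | T x < ENNReal.ofReal t}
        (fun _ => (1:ℝ)) t := by
      intro t
      rw [hHdef]
      simp [Set.indicator_apply]
    simp_rw [this]
    rw [integral_const_mul, integral_indicator_const (1:ℝ)
        (measurableSet_lt measurable_const ENNReal.measurable_ofReal),
      measureReal_def, expMeasure_lt_ofReal hδ, smul_eq_mul, mul_one,
      ENNReal.toReal_ofReal (expNegScaled_nonneg δ _)]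
  simp_rw [h2]
  exact integral_map (f := fun x => φ x * expNegScaled δ (T x)) hXm.aemeasurable
    ((hφ.mul ((measurable_expNegScaled δ).comp hT)).aestronglyMeasurable)

lemma sSup_nat_eq_iff {s : Set ℕ} (hdc : ∀ {j k : ℕ}, j ≤ k → k ∈ s → j ∈ s)
    (h0 : 0 ∈ s) (hub : ∃ k, k ∉ s) (n : ℕ) :
    sSup s = n ↔ (n ∈ s ∧ n + 1 ∉ s) := by
  obtain ⟨k₀, hk₀⟩ := hub
  have hbdd : BddAbove s := ⟨k₀, fun m hm => le_of_not_gt fun h => hk₀ (hdc h.le hm)⟩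
  constructor
  · rintro rfl
    refine ⟨Nat.sSup_mem ⟨0, h0⟩ hbdd, fun hmem => ?_⟩
    exact absurd (le_csSup hbdd hmem) (by omega)
  · rintro ⟨h1, h2⟩
    refine le_antisymm (csSup_le ⟨0, h0⟩ fun m hm => ?_) (le_csSup hbdd h1)
    by_contra hlt
    exact h2 (hdc (by omega) hm)

lemma integral_prod_range_of_iid {Ω : Type*} [MeasurableSpace Ω] (P : Measure Ω)
    [IsProbabilityMeasure P] (W : ℕ → Ω → ℝ) (hWmeas : ∀ i, Measurable (W i))
    (hWiid : iIndepFun W P)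
    (hW0 : ∀ i ω, 0 ≤ W i ω) (hW1 : ∀ i ω, W i ω ≤ 1) (k : ℕ) :
    ∫ ω, ∏ i ∈ Finset.range k, W i ω ∂P = ∏ i ∈ Finset.range k, ∫ ω, W i ω ∂P := by
  have hint : ∀ (t : Finset ℕ), Integrable (fun ω => ∏ i ∈ t, W i ω) P := by
    intro t
    refine (integrable_const (1:ℝ)).mono'
      ((Finset.measurable_prod t fun i _ => hWmeas i).aestronglyMeasurable)
      (ae_of_all _ fun ω => ?_)
    rw [Real.norm_eq_abs, abs_of_nonneg (Finset.prod_nonneg fun i _ => hW0 i ω)]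
    exact Finset.prod_le_one (fun i _ => hW0 i ω) (fun i _ => hW1 i ω)
  induction k with
  | zero => simp
  | succ k ih =>
    rw [Finset.prod_range_succ, ← ih]
    have hfn : (∏ j ∈ Finset.range k, W j) = fun ω => ∏ j ∈ Finset.range k, W j ω :=
      funext fun ω => Finset.prod_apply ω _ _
    have hindep : IndepFun (∏ j ∈ Finset.range k, W j) (W k) P :=
      hWiid.indepFun_finsetProd_of_notMem hWmeas Finset.notMem_range_self
    have h2 := hindep.integral_mul_eq_mul_integral (hfn ▸ hint (Finset.range k)).aestronglyMeasurable
      ((integrable_const (1:ℝ)).mono' (hWmeas k).aestronglyMeasurable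
        (ae_of_all _ fun ω => by
          rw [Real.norm_eq_abs, abs_of_nonneg (hW0 k ω)]; exact hW1 k ω)).aestronglyMeasurable
    calc ∫ ω, ∏ i ∈ Finset.range (k+1), W i ω ∂P
        = ∫ ω, ((∏ j ∈ Finset.range k, W j) * W k) ω ∂P := by
          congr 1; ext ω; simp [Finset.prod_apply, Finset.prod_range_succ]
      _ = integral P (∏ j ∈ Finset.range k, W j) * integral P (W k) := h2
      _ = (∫ ω, ∏ i ∈ Finset.range k, W i ω ∂P) * ∫ ω, W k ω ∂P := by rw [hfn]

/-- Let `(V_i)` be i.i.d. `(0,∞]`-valued random variables and `e` an independent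
exponential random variable with rate `δ > 0`.  With `M := max{n : V₁ + ⋯ + V_n < e}`,
for every `n ≥ 0` and every bounded measurable `F : (0,∞]^n → [0,∞)`,
`E[F(V₁,…,V_n) 1_{M = n}] = E[F(V₁,…,V_n) ∏_{i=1}^n e^{−δ V_i}] ⋅ E[1 − e^{−δ V₁}]`,
with the convention `e^{−δ·∞} := 0`. -/
theorem tilted_law_of_first_detection
    {Ω : Type*} [MeasurableSpace Ω] (P : Measure Ω) [IsProbabilityMeasure P]
    (δ : ℝ) (hδ : 0 < δ)
    (V : ℕ → Ω → ℝ≥0∞) (hVmeas : ∀ i, Measurable (V i))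
    (hVpos : ∀ i ω, 0 < V i ω)
    (hViid : iIndepFun V P)
    (hVident : ∀ i, IdentDistrib (V i) (V 0) P P)
    (e : Ω → ℝ) (he : Measurable e) (hlaw : Measure.map e P = expMeasure δ)
    (hindep : IndepFun (fun ω => fun i => V i ω) e P)
    (n : ℕ) (F : (Fin n → ℝ≥0∞) → ℝ) (hFmeas : Measurable F)
    (hFpos : ∀ v, 0 ≤ F v) (hFbdd : ∃ C, ∀ v, F v ≤ C) :
    (∫ ω, {ω' | detectionIndex V e ω' = n}.indicator
        (fun ω' => F (fun i : Fin n => V i ω')) ω ∂P) =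
      (∫ ω, F (fun i : Fin n => V i ω) * ∏ i : Fin n, expNegScaled δ (V i ω) ∂P) *
        ∫ ω, (1 - expNegScaled δ (V 0 ω)) ∂P := by
  classical
  obtain ⟨C, hC⟩ := hFbdd
  haveI := isProbabilityMeasure_expMeasure hδ
  have hC0 : 0 ≤ C := le_trans (hFpos _) (hC (fun _ => 1))
  have hφmeas : Measurable (fun x : ℕ → ℝ≥0∞ => F (fun i : Fin n => x i)) :=
    hFmeas.comp (measurable_pi_lambda _ fun i => measurable_pi_apply _)
  have hφbd : ∀ x : ℕ → ℝ≥0∞, |F (fun i : Fin n => x i)| ≤ C := fun x => by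
    rw [abs_of_nonneg (hFpos _)]; exact hC _
  have hTmeas : ∀ k : ℕ, Measurable (fun x : ℕ → ℝ≥0∞ => ∑ i ∈ Finset.range k, x i) :=
    fun k => Finset.measurable_sum _ fun i _ => measurable_pi_apply i
  have hSmeas : ∀ k : ℕ, Measurable (fun ω => ∑ i ∈ Finset.range k, V i ω) :=
    fun k => Finset.measurable_sum _ fun i _ => hVmeas i
  have hWmeas : ∀ i : ℕ, Measurable (fun ω => expNegScaled δ (V i ω)) :=
    fun i => (measurable_expNegScaled δ).comp (hVmeas i)
  have hWiid : iIndepFun (fun i ω => expNegScaled δ (V i ω)) P :=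
    hViid.comp _ fun i => measurable_expNegScaled δ
  have hW0 : ∀ (i : ℕ) (ω : Ω), 0 ≤ expNegScaled δ (V i ω) :=
    fun i ω => expNegScaled_nonneg δ _
  have hW1 : ∀ (i : ℕ) (ω : Ω), expNegScaled δ (V i ω) ≤ 1 :=
    fun i ω => expNegScaled_le_one hδ.le _
  have hWint : ∀ i : ℕ, Integrable (fun ω => expNegScaled δ (V i ω)) P :=
    fun i => (integrable_const (1:ℝ)).mono' (hWmeas i).aestronglyMeasurable
      (ae_of_all _ fun ω => by rw [Real.norm_eq_abs, abs_of_nonneg (hW0 i ω)]; exact hW1 i ω)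
  set r : ℝ := ∫ ω, expNegScaled δ (V 0 ω) ∂P with hrdef
  have hrid : ∀ i : ℕ, ∫ ω, expNegScaled δ (V i ω) ∂P = r := fun i =>
    ((hVident i).comp (measurable_expNegScaled δ)).integral_eq
  have hr0 : 0 ≤ r := integral_nonneg fun ω => hW0 0 ω
  have hr1 : r < 1 := by
    have hpos : 0 < ∫ ω, (1 - expNegScaled δ (V 0 ω)) ∂P := by
      rw [integral_pos_iff_support_of_nonneg (f := fun ω => 1 - expNegScaled δ (V 0 ω))
        (fun ω => sub_nonneg.mpr (hW1 0 ω))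
        ((integrable_const 1).sub (hWint 0))]
      have hsupp : Function.support (fun ω => 1 - expNegScaled δ (V 0 ω)) = Set.univ := by
        ext ω
        simp only [Function.mem_support, Set.mem_univ, iff_true]
        have := expNegScaled_lt_one hδ (hVpos 0 ω)
        intro h; linarith [sub_eq_zero.mp h]
      rw [hsupp]
      simp
    have heq : ∫ ω, (1 - expNegScaled δ (V 0 ω)) ∂P = 1 - r := by
      rw [integral_sub (integrable_const 1) (hWint 0), integral_const]
      simp [hrdef]
    rw [heq] at hpos
    linarith
  have hBmeas : ∀ k : ℕ,
      MeasurableSet {ω | (∑ i ∈ Finset.range k, V i ω) < ENNReal.ofReal (e ω)} :=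
    fun k => measurableSet_lt (hSmeas k) (ENNReal.measurable_ofReal.comp he)
  have hPB : ∀ k : ℕ,
      (P {ω | (∑ i ∈ Finset.range k, V i ω) < ENNReal.ofReal (e ω)}).toReal = r ^ k := by
    intro k
    have h1 : (∫ ω, (1:ℝ) *
          (if (∑ i ∈ Finset.range k, V i ω) < ENNReal.ofReal (e ω) then (1:ℝ) else 0) ∂P)
        = ∫ ω, (1:ℝ) * expNegScaled δ (∑ i ∈ Finset.range k, V i ω) ∂P :=
      key_indep_integral P δ hδ V hVmeas e he hlaw hindep (fun _ => (1:ℝ)) measurable_const 1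
        (fun x => by norm_num) (fun x => ∑ i ∈ Finset.range k, x i) (hTmeas k)
    simp only [one_mul] at h1
    have h2 : (P {ω | (∑ i ∈ Finset.range k, V i ω) < ENNReal.ofReal (e ω)}).toReal
        = ∫ ω, (if (∑ i ∈ Finset.range k, V i ω) < ENNReal.ofReal (e ω)
            then (1:ℝ) else 0) ∂P := by
      rw [← measureReal_def, ← integral_indicator_one (hBmeas k)]
      congr 1
      ext ω
      simp [Set.indicator_apply]
    rw [h2, h1]
    have h3 : ∀ ω, expNegScaled δ (∑ i ∈ Finset.range k, V i ω)
        = ∏ i ∈ Finset.range k, expNegScaled δ (V i ω) := fun ω => expNegScaled_sum δ _ _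
    simp_rw [h3]
    rw [integral_prod_range_of_iid P _ hWmeas hWiid hW0 hW1 k,
      Finset.prod_congr rfl (fun i _ => hrid i), Finset.prod_const, Finset.card_range]
  have hN1 : P {ω | e ω ≤ 0} = 0 := by
    have hpre : {ω | e ω ≤ 0} = e ⁻¹' Set.Iic 0 := rfl
    rw [hpre, ← Measure.map_apply he measurableSet_Iic, hlaw, expMeasure_Iic hδ]
    norm_num
  have hN2 : P {ω | ∀ k : ℕ, (∑ i ∈ Finset.range k, V i ω) < ENNReal.ofReal (e ω)} = 0 := by
    have hle : ∀ k : ℕ,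
        P {ω | ∀ k : ℕ, (∑ i ∈ Finset.range k, V i ω) < ENNReal.ofReal (e ω)}
          ≤ P {ω | (∑ i ∈ Finset.range k, V i ω) < ENNReal.ofReal (e ω)} :=
      fun k => measure_mono (fun ω hω => hω k)
    have hto : ∀ k : ℕ,
        (P {ω | ∀ k : ℕ, (∑ i ∈ Finset.range k, V i ω) < ENNReal.ofReal (e ω)}).toReal
          ≤ r ^ k :=
      fun k => (hPB k) ▸ ENNReal.toReal_mono (measure_ne_top _ _) (hle k)
    have hlim : Filter.Tendsto (fun k : ℕ => r ^ k) Filter.atTop (nhds 0) :=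
      tendsto_pow_atTop_nhds_zero_of_lt_one hr0 hr1
    have h0 := ge_of_tendsto hlim (Filter.Eventually.of_forall hto)
    have h0' := le_antisymm h0 ENNReal.toReal_nonneg
    rcases (ENNReal.toReal_eq_zero_iff _).mp h0' with h | h
    · exact h
    · exact absurd h (measure_ne_top _ _)
  have hait : (fun ω => Set.indicator {ω' | detectionIndex V e ω' = n}
        (fun ω' => F (fun i : Fin n => V i ω')) ω)
      =ᵐ[P] (fun ω => F (fun i : Fin n => V i ω) *
          (if (∑ i ∈ Finset.range n, V i ω) < ENNReal.ofReal (e ω) then (1:ℝ) else 0)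
        - F (fun i : Fin n => V i ω) *
          (if (∑ i ∈ Finset.range (n+1), V i ω) < ENNReal.ofReal (e ω)
            then (1:ℝ) else 0)) := by
    have h1 : ∀ᵐ ω ∂P, ¬ (e ω ≤ 0) := by
      rw [ae_iff]; simpa using hN1
    have h2 : ∀ᵐ ω ∂P,
        ¬ ∀ k : ℕ, (∑ i ∈ Finset.range k, V i ω) < ENNReal.ofReal (e ω) := by
      rw [ae_iff]; simpa using hN2
    filter_upwards [h1, h2] with ω hω1 hω2
    have hdc : ∀ {j k : ℕ}, j ≤ k →
        (∑ i ∈ Finset.range k, V i ω) < ENNReal.ofReal (e ω) →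
        (∑ i ∈ Finset.range j, V i ω) < ENNReal.ofReal (e ω) := fun hjk hk =>
      lt_of_le_of_lt (Finset.sum_le_sum_of_subset (Finset.range_subset_range.mpr hjk)) hk
    have h0 : (∑ i ∈ Finset.range 0, V i ω) < ENNReal.ofReal (e ω) := by
      simp only [Finset.range_zero, Finset.sum_empty]
      exact ENNReal.ofReal_pos.mpr (lt_of_not_ge hω1)
    have hchar : detectionIndex V e ω = n ↔
        ((∑ i ∈ Finset.range n, V i ω) < ENNReal.ofReal (e ω) ∧
         ¬ (∑ i ∈ Finset.range (n+1), V i ω) < ENNReal.ofReal (e ω)) := by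
      unfold detectionIndex
      exact sSup_nat_eq_iff (fun {j k} hjk hk => hdc hjk hk) h0 (not_forall.mp hω2) n
    by_cases hA : (∑ i ∈ Finset.range n, V i ω) < ENNReal.ofReal (e ω)
    · by_cases hB : (∑ i ∈ Finset.range (n+1), V i ω) < ENNReal.ofReal (e ω)
      · simp [Set.indicator_apply, hchar, hA, hB]
      · simp [Set.indicator_apply, hchar, hA, hB]
    · have hB : ¬ (∑ i ∈ Finset.range (n+1), V i ω) < ENNReal.ofReal (e ω) :=
        fun hB => hA (hdc (Nat.le_succ n) hB)
      simp [Set.indicator_apply, hchar, hA, hB]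
  rw [integral_congr_ae hait]
  have hintpart : ∀ (g : Ω → ℝ), Measurable g → (∀ ω, |g ω| ≤ C) → Integrable g P :=
    fun g hg hb => (integrable_const C).mono' hg.aestronglyMeasurable
      (ae_of_all _ fun ω => by rw [Real.norm_eq_abs]; exact hb ω)
  have hindmeas : ∀ k : ℕ, Measurable (fun ω =>
      (if (∑ i ∈ Finset.range k, V i ω) < ENNReal.ofReal (e ω) then (1:ℝ) else 0)) :=
    fun k => Measurable.ite (hBmeas k) measurable_const measurable_const
  have hfm : Measurable (fun ω => F (fun i : Fin n => V i ω)) :=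
    hFmeas.comp (measurable_pi_lambda _ fun i => hVmeas i)
  have hmulbd : ∀ (g : Ω → ℝ), (∀ ω, 0 ≤ g ω) → (∀ ω, g ω ≤ 1) →
      ∀ ω, |F (fun i : Fin n => V i ω) * g ω| ≤ C := by
    intro g hg0 hg1 ω
    rw [abs_mul]
    calc |F (fun i : Fin n => V i ω)| * |g ω|
        ≤ C * 1 := mul_le_mul (by rw [abs_of_nonneg (hFpos _)]; exact hC _)
          (by rw [abs_of_nonneg (hg0 ω)]; exact hg1 ω) (abs_nonneg _) hC0
      _ = C := mul_one C
  rw [integral_sub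
    (hintpart _ (hfm.fun_mul (hindmeas n)) (hmulbd _ (fun ω => by split <;> norm_num)
      (fun ω => by split <;> norm_num)))
    (hintpart _ (hfm.fun_mul (hindmeas (n+1))) (hmulbd _ (fun ω => by split <;> norm_num)
      (fun ω => by split <;> norm_num)))]
  have hkA : (∫ ω, F (fun i : Fin n => V i ω) *
        (if (∑ i ∈ Finset.range n, V i ω) < ENNReal.ofReal (e ω) then (1:ℝ) else 0) ∂P)
      = ∫ ω, F (fun i : Fin n => V i ω) *
          expNegScaled δ (∑ i ∈ Finset.range n, V i ω) ∂P :=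
    key_indep_integral P δ hδ V hVmeas e he hlaw hindep
      (fun x => F (fun i : Fin n => x i)) hφmeas C hφbd
      (fun x => ∑ i ∈ Finset.range n, x i) (hTmeas n)
  have hkB : (∫ ω, F (fun i : Fin n => V i ω) *
        (if (∑ i ∈ Finset.range (n+1), V i ω) < ENNReal.ofReal (e ω) then (1:ℝ) else 0) ∂P)
      = ∫ ω, F (fun i : Fin n => V i ω) *
          expNegScaled δ (∑ i ∈ Finset.range (n+1), V i ω) ∂P :=
    key_indep_integral P δ hδ V hVmeas e he hlaw hindep
      (fun x => F (fun i : Fin n => x i)) hφmeas C hφbd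
      (fun x => ∑ i ∈ Finset.range (n+1), x i) (hTmeas (n+1))
  rw [hkA, hkB]
  -- combine into a single integral of G * (1 - expNegScaled δ (V n ω))
  have hGmeas : Measurable (fun ω => F (fun i : Fin n => V i ω) *
      ∏ i : Fin n, expNegScaled δ (V i ω)) :=
    hfm.mul (Finset.measurable_prod _ fun i _ => (measurable_expNegScaled δ).comp (hVmeas i))
  have hprod0 : ∀ ω, 0 ≤ ∏ i : Fin n, expNegScaled δ (V i ω) :=
    fun ω => Finset.prod_nonneg fun i _ => hW0 i ω
  have hprod1 : ∀ ω, ∏ i : Fin n, expNegScaled δ (V i ω) ≤ 1 :=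
    fun ω => Finset.prod_le_one (fun i _ => hW0 i ω) (fun i _ => hW1 i ω)
  have hGint : Integrable (fun ω => F (fun i : Fin n => V i ω) *
      ∏ i : Fin n, expNegScaled δ (V i ω)) P :=
    hintpart _ hGmeas (hmulbd _ hprod0 hprod1)
  have hexp_eq : ∀ ω, expNegScaled δ (∑ i ∈ Finset.range n, V i ω)
      = ∏ i : Fin n, expNegScaled δ (V i ω) := fun ω =>
    (expNegScaled_sum δ _ _).trans (Fin.prod_univ_eq_prod_range _ n).symm
  have hsplit : (∫ ω, F (fun i : Fin n => V i ω) *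
          expNegScaled δ (∑ i ∈ Finset.range n, V i ω) ∂P)
      - (∫ ω, F (fun i : Fin n => V i ω) *
          expNegScaled δ (∑ i ∈ Finset.range (n+1), V i ω) ∂P)
      = ∫ ω, (F (fun i : Fin n => V i ω) * ∏ i : Fin n, expNegScaled δ (V i ω)) *
          (1 - expNegScaled δ (V n ω)) ∂P := by
    have hint1 : Integrable (fun ω => F (fun i : Fin n => V i ω) *
        expNegScaled δ (∑ i ∈ Finset.range n, V i ω)) P :=
      hintpart _ (hfm.mul ((measurable_expNegScaled δ).comp (hSmeas n)))
        (hmulbd _ (fun ω => expNegScaled_nonneg δ _) (fun ω => expNegScaled_le_one hδ.le _))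
    have hint2 : Integrable (fun ω => F (fun i : Fin n => V i ω) *
        expNegScaled δ (∑ i ∈ Finset.range (n+1), V i ω)) P :=
      hintpart _ (hfm.mul ((measurable_expNegScaled δ).comp (hSmeas (n+1))))
        (hmulbd _ (fun ω => expNegScaled_nonneg δ _) (fun ω => expNegScaled_le_one hδ.le _))
    rw [← integral_sub hint1 hint2]
    congr 1
    ext ω
    have e1 : expNegScaled δ (∑ i ∈ Finset.range (n+1), V i ω)
        = expNegScaled δ (∑ i ∈ Finset.range n, V i ω) * expNegScaled δ (V n ω) := by
      rw [Finset.sum_range_succ, expNegScaled_add]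
    rw [e1, hexp_eq ω]
    ring
  rw [hsplit]
  -- independence factorization
  have hgLmeas : Measurable (fun v : ((i : (Finset.range n : Finset ℕ)) → ℝ≥0∞) =>
      F (fun i : Fin n => v ⟨(i : ℕ), Finset.mem_range.mpr i.isLt⟩) *
        ∏ i : Fin n, expNegScaled δ (v ⟨(i : ℕ), Finset.mem_range.mpr i.isLt⟩)) :=
    (hFmeas.comp (measurable_pi_lambda _ fun i => measurable_pi_apply _)).mul
      (Finset.measurable_prod _ fun i _ =>
        (measurable_expNegScaled δ).comp (measurable_pi_apply _))
  have hgRmeas : Measurable (fun v : ((i : ({n} : Finset ℕ)) → ℝ≥0∞) =>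
      1 - expNegScaled δ (v ⟨n, Finset.mem_singleton_self n⟩)) :=
    measurable_const.sub ((measurable_expNegScaled δ).comp (measurable_pi_apply _))
  have hIndepG : IndepFun
      (fun ω => F (fun i : Fin n => V i ω) * ∏ i : Fin n, expNegScaled δ (V i ω))
      (fun ω => 1 - expNegScaled δ (V n ω)) P :=
    (hViid.indepFun_finset (Finset.range n) {n}
      (Finset.disjoint_singleton_right.mpr Finset.notMem_range_self) hVmeas).comp
      hgLmeas hgRmeas
  have hBint : Integrable (fun ω => 1 - expNegScaled δ (V n ω)) P :=
    (integrable_const 1).sub (hWint n)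
  have hfact := hIndepG.integral_mul_eq_mul_integral hGint.aestronglyMeasurable hBint.aestronglyMeasurable
  have hid : ∫ ω, (1 - expNegScaled δ (V n ω)) ∂P
      = ∫ ω, (1 - expNegScaled δ (V 0 ω)) ∂P :=
    ((hVident n).comp (measurable_const.sub (measurable_expNegScaled δ))).integral_eq
  calc (∫ ω, (F (fun i : Fin n => V i ω) * ∏ i : Fin n, expNegScaled δ (V i ω)) *
          (1 - expNegScaled δ (V n ω)) ∂P)
      = (∫ ω, F (fun i : Fin n => V i ω) * ∏ i : Fin n, expNegScaled δ (V i ω) ∂P) *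
          ∫ ω, (1 - expNegScaled δ (V n ω)) ∂P := hfact
    _ = (∫ ω, F (fun i : Fin n => V i ω) * ∏ i : Fin n, expNegScaled δ (V i ω) ∂P) *
          ∫ ω, (1 - expNegScaled δ (V 0 ω)) ∂P := by rw [hid]
end

section
/- Let κ be a probability measure on (0,∞) with finite mean m = ∫ z κ(dz) ∈ (0,∞), let b > 0 and δ > 0, and let φ > δ satisfy φ − (b/m) ∫_0^∞ (1 − e^{−φ x}) κ((x,∞)) dx = δ. Then (b/m) · (φ/(φ − δ)) · ∫_{(0,∞)} ( ∫_0^∞ ∫_0^∞ 1{ u + a < z } e^{−φ a} du da ) κ(dz) = 1; that is, the joint law of the triple (U, A, R) given in Corollary 5.1, with density (b/m)(φ/(φ−δ)) e^{−φ a} 1{z > u + a} with respect to du da κ(dz) under the substitution r = z − u − a, is a probability distribution. -/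
open MeasureTheory Set ENNReal

section HospitalAux

lemma hosp_exp_ii (φ c : ℝ) (hφ : 0 < φ) :
    ∫ x in (0:ℝ)..c, Real.exp (-φ * x) = (1 - Real.exp (-φ * c)) / φ := by
  have hd : ∀ x:ℝ, HasDerivAt (fun y => -Real.exp (-φ*y)/φ) (Real.exp (-φ*x)) x := by
    intro x
    have h1 : HasDerivAt (fun y : ℝ => -φ*y) (-φ) x := by
      simpa using (hasDerivAt_id x).const_mul (-φ)
    have h2 := (Real.hasDerivAt_exp (-φ*x)).comp x h1
    have h3 := (h2.neg).div_const φ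
    refine h3.congr_deriv ?_
    rw [div_eq_iff hφ.ne']; ring
  rw [intervalIntegral.integral_eq_sub_of_hasDerivAt (fun x _ => hd x)]
  · simp
    ring
  · apply Continuous.intervalIntegrable
    continuity

lemma hosp_exp_Ioo (φ c : ℝ) (hφ : 0 < φ) (hc : 0 ≤ c) :
    ∫ x in Ioo (0:ℝ) c, Real.exp (-φ * x) = (1 - Real.exp (-φ * c)) / φ := by
  rw [← hosp_exp_ii φ c hφ, intervalIntegral.integral_of_le hc, integral_Ioc_eq_integral_Ioo]

lemma hosp_inner_a (φ z u : ℝ) (hφ : 0 < φ) :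
    ∫ a in Ioi (0:ℝ), (if u + a < z then Real.exp (-φ * a) else 0)
      = if u < z then (1 - Real.exp (-φ * (z - u))) / φ else 0 := by
  have heq : (fun a : ℝ => if u + a < z then Real.exp (-φ * a) else 0)
      = (Iio (z - u)).indicator (fun a => Real.exp (-φ * a)) := by
    ext a
    simp only [Set.indicator, mem_Iio]
    congr 1
    simp [lt_sub_iff_add_lt']
  rw [heq, setIntegral_indicator measurableSet_Iio]
  have h0 : Ioi (0:ℝ) ∩ Iio (z - u) = Ioo 0 (z - u) := Ioi_inter_Iio
  rw [h0]
  by_cases h : u < z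
  · rw [if_pos h, hosp_exp_Ioo φ (z-u) hφ (by linarith)]
  · rw [if_neg h]
    have : Ioo (0:ℝ) (z - u) = ∅ := Ioo_eq_empty (by push_neg at h; linarith)
    simp [this]

lemma hosp_inner_u (φ z : ℝ) (hφ : 0 < φ) (hz : 0 < z) :
    ∫ u in Ioi (0:ℝ), (if u < z then (1 - Real.exp (-φ * (z - u))) / φ else 0)
      = (z - (1 - Real.exp (-φ * z)) / φ) / φ := by
  have heq : (fun u : ℝ => if u < z then (1 - Real.exp (-φ * (z - u))) / φ else 0)
      = (Iio z).indicator (fun u => (1 - Real.exp (-φ * (z - u))) / φ) := by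
    ext u; simp [Set.indicator]
  rw [heq, setIntegral_indicator measurableSet_Iio, Ioi_inter_Iio,
    ← integral_Ioc_eq_integral_Ioo, ← intervalIntegral.integral_of_le hz.le]
  have hd : ∀ u:ℝ, HasDerivAt (fun y => (y - Real.exp (-φ*(z-y))/φ)/φ)
      ((1 - Real.exp (-φ * (z - u))) / φ) u := by
    intro u
    have h1 : HasDerivAt (fun y : ℝ => -φ*(z-y)) φ u := by
      have h0 : HasDerivAt (fun y : ℝ => z - y) (-1) u := by
        simpa using (hasDerivAt_id u).const_sub z
      simpa using h0.const_mul (-φ)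
    have h2 := (Real.hasDerivAt_exp (-φ*(z-u))).comp u h1
    have h3 := ((hasDerivAt_id u).sub (h2.div_const φ)).div_const φ
    refine h3.congr_deriv ?_
    rw [mul_div_cancel_right₀ _ hφ.ne']
  rw [intervalIntegral.integral_eq_sub_of_hasDerivAt (fun u _ => hd u)]
  · simp
    ring
  · apply Continuous.intervalIntegrable
    continuity

lemma hosp_cont_f (φ : ℝ) : Continuous (fun x : ℝ => 1 - Real.exp (-φ * x)) :=
  continuous_const.sub (Real.continuous_exp.comp (continuous_const.mul continuous_id))

lemma hosp_intOn_f (φ z : ℝ) : IntegrableOn (fun x : ℝ => 1 - Real.exp (-φ * x)) (Ioo 0 z) :=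
  ((hosp_cont_f φ).integrableOn_Icc).mono_set Ioo_subset_Icc_self

lemma hosp_one_sub_exp_Ioo (φ z : ℝ) (hφ : 0 < φ) (hz : 0 ≤ z) :
    ∫ x in Ioo (0:ℝ) z, (1 - Real.exp (-φ * x)) = z - (1 - Real.exp (-φ * z)) / φ := by
  have h1 : IntegrableOn (fun _ : ℝ => (1:ℝ)) (Ioo 0 z) := integrableOn_const (by simp)
  have h2 : IntegrableOn (fun x : ℝ => Real.exp (-φ * x)) (Ioo 0 z) :=
    ((Real.continuous_exp.comp (continuous_const.mul continuous_id)).integrableOn_Icc).mono_set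
      Ioo_subset_Icc_self
  rw [integral_sub h1 h2, hosp_exp_Ioo φ z hφ hz]
  simp [Real.volume_Ioo, hz]

lemma hosp_one_sub_exp_nonneg (φ x : ℝ) (hφ : 0 < φ) (hx : 0 ≤ x) :
    0 ≤ 1 - Real.exp (-φ * x) := by
  have : Real.exp (-φ * x) ≤ 1 := by
    rw [Real.exp_le_one_iff]; nlinarith
  linarith

lemma hosp_G_nonneg (φ z : ℝ) (hφ : 0 < φ) (hz : 0 ≤ z) :
    0 ≤ z - (1 - Real.exp (-φ * z)) / φ := by
  rw [← hosp_one_sub_exp_Ioo φ z hφ hz]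
  exact setIntegral_nonneg measurableSet_Ioo
    (fun x hx => hosp_one_sub_exp_nonneg φ x hφ hx.1.le)

lemma hosp_fubini_step (κ : Measure ℝ) [IsProbabilityMeasure κ] (φ : ℝ) (hφ : 0 < φ) :
    ∫ x in Ioi (0:ℝ), (1 - Real.exp (-φ * x)) * (κ (Ioi x)).toReal
      = ∫ z in Ioi (0:ℝ), (z - (1 - Real.exp (-φ * z)) / φ) ∂κ := by
  set f : ℝ → ℝ := fun x => 1 - Real.exp (-φ * x) with hf
  have hmes : Measurable fun x : ℝ => κ (Ioi x) :=
    Antitone.measurable (fun x y hxy => κ.mono (Ioi_subset_Ioi hxy))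
  have hmesf : Measurable f := (hosp_cont_f φ).measurable
  set F : ℝ → ℝ → ℝ≥0∞ := fun x z => if x < z then ENNReal.ofReal (f x) else 0 with hF
  have hFmes : Measurable (Function.uncurry F) := by
    apply Measurable.ite (measurableSet_lt measurable_fst measurable_snd)
    · exact ((hmesf.comp measurable_fst).ennreal_ofReal)
    · exact measurable_const
  have hL : ∫ x in Ioi (0:ℝ), f x * (κ (Ioi x)).toReal
      = (∫⁻ x in Ioi (0:ℝ), ENNReal.ofReal (f x) * κ (Ioi x)).toReal := by
    rw [integral_eq_lintegral_of_nonneg_ae]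
    · congr 1
      refine setLIntegral_congr_fun measurableSet_Ioi ?_
      intro x hx
      beta_reduce
      rw [ENNReal.ofReal_mul (hosp_one_sub_exp_nonneg φ x hφ (le_of_lt hx)),
        ENNReal.ofReal_toReal (measure_ne_top κ _)]
    · refine (ae_restrict_iff' measurableSet_Ioi).2 (Filter.Eventually.of_forall ?_)
      intro x hx
      exact mul_nonneg (hosp_one_sub_exp_nonneg φ x hφ (le_of_lt hx)) ENNReal.toReal_nonneg
    · exact (hmesf.mul hmes.ennreal_toReal).aestronglyMeasurable
  have hR : ∫ z in Ioi (0:ℝ), (z - (1 - Real.exp (-φ * z)) / φ) ∂κ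
      = (∫⁻ z in Ioi (0:ℝ), ENNReal.ofReal (z - (1 - Real.exp (-φ * z)) / φ) ∂κ).toReal := by
    rw [integral_eq_lintegral_of_nonneg_ae]
    · refine (ae_restrict_iff' measurableSet_Ioi).2 (Filter.Eventually.of_forall ?_)
      exact fun z hz => hosp_G_nonneg φ z hφ (le_of_lt hz)
    · exact Measurable.aestronglyMeasurable (measurable_id.sub (hmesf.div_const φ))
  rw [hL, hR]
  congr 1
  calc ∫⁻ x in Ioi (0:ℝ), ENNReal.ofReal (f x) * κ (Ioi x)
      = ∫⁻ x in Ioi (0:ℝ), ∫⁻ z in Ioi (0:ℝ), F x z ∂κ := by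
        refine setLIntegral_congr_fun measurableSet_Ioi ?_
        intro x hx
        beta_reduce
        have h1 : (fun z => F x z) = (Ioi x).indicator (fun _ => ENNReal.ofReal (f x)) := by
          ext z
          simp only [hF, Set.indicator, mem_Ioi]
        rw [h1, lintegral_indicator measurableSet_Ioi,
          Measure.restrict_restrict measurableSet_Ioi,
          inter_eq_left.2 (Ioi_subset_Ioi (le_of_lt hx)), setLIntegral_const]
    _ = ∫⁻ z in Ioi (0:ℝ), ∫⁻ x in Ioi (0:ℝ), F x z ∂(volume) ∂κ :=
        lintegral_lintegral_swap hFmes.aemeasurable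
    _ = ∫⁻ z in Ioi (0:ℝ), ENNReal.ofReal (z - (1 - Real.exp (-φ * z)) / φ) ∂κ := by
        refine setLIntegral_congr_fun measurableSet_Ioi ?_
        intro z hz
        beta_reduce
        have h1 : (fun x => F x z) = (Iio z).indicator (fun x => ENNReal.ofReal (f x)) := by
          ext x
          simp only [hF, Set.indicator, mem_Iio]
        rw [h1, lintegral_indicator measurableSet_Iio,
          Measure.restrict_restrict measurableSet_Iio, inter_comm, Ioi_inter_Iio]
        rw [← ofReal_integral_eq_lintegral_ofReal (hosp_intOn_f φ z)]
        · rw [hosp_one_sub_exp_Ioo φ z hφ (le_of_lt hz)]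
        · refine (ae_restrict_iff' measurableSet_Ioo).2 (Filter.Eventually.of_forall ?_)
          exact fun x hx => hosp_one_sub_exp_nonneg φ x hφ hx.1.le

end HospitalAux

/-- In the hospital outbreak model, let `κ` be the law of the length of stay, `m` its
(finite, positive) mean, `b > 0` the transmission rate, `δ > 0` the detection rate, and
let `φ > δ` satisfy `φ − (b/m) ∫_0^∞ (1 − e^{−φ x}) κ((x,∞)) dx = δ` (i.e. `ψ(φ) = δ`
for the Laplace exponent built from the lifespan measure `π(dx) = (b/m) κ((x,∞)) dx`).
Then `(b/m) ⋅ (φ/(φ − δ)) ⋅ ∫_{(0,∞)} (∫_0^∞ ∫_0^∞ 1{u + a < z} e^{−φ a} du da) κ(dz) = 1`;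
that is, the joint law of the triple `(U, A, R)` of Corollary 5.1, with density
`(b/m)(φ/(φ−δ)) e^{−φ a} 1{z > u + a}` with respect to `du da κ(dz)` under the
substitution `r = z − u − a`, is a probability distribution. -/
theorem hospital_triple_law_is_probability
    (κ : Measure ℝ) [IsProbabilityMeasure κ] (hκ : κ (Set.Iic 0) = 0)
    (m : ℝ) (hm : 0 < m) (hmean : m = ∫ z in Set.Ioi (0 : ℝ), z ∂κ)
    (b δ φ : ℝ) (hb : 0 < b) (hδ : 0 < δ) (hφδ : δ < φ)
    (hroot : φ - (b / m) *
        (∫ x in Set.Ioi (0 : ℝ), (1 - Real.exp (-φ * x)) * (κ (Set.Ioi x)).toReal) = δ) :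
    (b / m) * (φ / (φ - δ)) *
        (∫ z in Set.Ioi (0 : ℝ),
          (∫ u in Set.Ioi (0 : ℝ), ∫ a in Set.Ioi (0 : ℝ),
            (if u + a < z then Real.exp (-φ * a) else 0)) ∂κ) = 1 := by
  have hφ0 : 0 < φ := hδ.trans hφδ
  -- evaluate the inner double integral for z > 0
  have hinner : ∀ z ∈ Ioi (0:ℝ),
      (∫ u in Set.Ioi (0 : ℝ), ∫ a in Set.Ioi (0 : ℝ),
        (if u + a < z then Real.exp (-φ * a) else 0))
      = (z - (1 - Real.exp (-φ * z)) / φ) / φ := by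
    intro z hz
    have h1 : ∀ u : ℝ, (∫ a in Set.Ioi (0 : ℝ),
        (if u + a < z then Real.exp (-φ * a) else 0))
        = if u < z then (1 - Real.exp (-φ * (z - u))) / φ else 0 :=
      fun u => hosp_inner_a φ z u hφ0
    simp_rw [h1]
    exact hosp_inner_u φ z hφ0 hz
  rw [setIntegral_congr_fun measurableSet_Ioi hinner]
  have hdiv : ∫ z in Ioi (0:ℝ), ((z - (1 - Real.exp (-φ * z)) / φ) / φ) ∂κ
      = (∫ z in Ioi (0:ℝ), (z - (1 - Real.exp (-φ * z)) / φ) ∂κ) / φ :=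
    integral_div φ _
  rw [hdiv]
  -- use the root equation
  have hfub := hosp_fubini_step κ φ hφ0
  rw [hfub] at hroot
  set I := ∫ z in Ioi (0:ℝ), (z - (1 - Real.exp (-φ * z)) / φ) ∂κ with hI
  have hm' : m ≠ 0 := ne_of_gt hm
  have hb' : b ≠ 0 := ne_of_gt hb
  have hφ' : φ ≠ 0 := ne_of_gt hφ0
  have hφδ' : φ - δ ≠ 0 := sub_ne_zero.2 (ne_of_gt hφδ)
  have hIval : I = (φ - δ) * m / b := by
    field_simp at hroot
    field_simp
    linarith
  rw [hIval]
  field_simp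
end
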